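/- Let 1 ≤ p, q ≤ ∞, N ≥ 1 an integer, Λ and Λ' relatively-separated subsets of ℝ^d, and A = (a(λ,λ'))_{λ∈Λ,λ'∈Λ'} a matrix in the Sjöstrand class C(Λ,Λ'). Then there exists a constant C depending only on d, p, q such that for all c ∈ ℓ^q(Λ'): ‖( ‖(A_N Ψ_n^N − Ψ_n^N A_N)c‖_{ℓ^p(Λ)} )_{n∈Nℤ^d}‖_{ℓ^q(Nℤ^d)} ≤ C R(Λ)^{1/p} R(Λ')^{1−1/p} · min_{0≤s≤N}( ‖A − A_s‖_C + (s/N)‖A‖_C ) · ‖( ‖Ψ_n^N c‖_{ℓ^p(Λ')} )_{n∈Nℤ^d}‖_{ℓ^q(Nℤ^d)}. -/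

import Mathlib

open scoped ENNReal NNReal

/-- The cube `k + [0,1)^d` in `ℝ^d`. -/
def unitCube {d : ℕ} (k : Fin d → ℤ) : Set (Fin d → ℝ) :=
  {x | ∀ i, (k i : ℝ) ≤ x i ∧ x i < k i + 1}

/-- The relative-separation constant `R(Λ) = sup_x ∑_{λ ∈ Λ} χ_{λ+[0,1)^d}(x)` of
a subset `Λ` of `ℝ^d`; `Λ` is relatively separated when `relSep Λ < ∞`. -/
noncomputable def relSep {d : ℕ} (Λ : Set (Fin d → ℝ)) : ℝ≥0∞ :=
  ⨆ x : Fin d → ℝ, ∑' l : Λ,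
    (unitCube (0 : Fin d → ℤ)).indicator (fun _ => (1 : ℝ≥0∞)) (x - (l : Fin d → ℝ))

/-- The Sjöstrand class norm
`‖A‖_C = ∑_{k ∈ ℤ^d} sup { |a(λ,λ')| : λ - λ' ∈ k + [0,1)^d }` of a matrix indexed by
`Λ × Λ'`; the matrix belongs to the Sjöstrand class `C(Λ,Λ')` when `sjNorm a < ∞`. -/
noncomputable def sjNorm {d : ℕ} {Λ Λ' : Set (Fin d → ℝ)} (a : Λ → Λ' → ℂ) : ℝ≥0∞ :=
  ∑' k : Fin d → ℤ, ⨆ (l : Λ) (l' : Λ')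
    (_ : (l : Fin d → ℝ) - (l' : Fin d → ℝ) ∈ unitCube k), (‖a l l'‖₊ : ℝ≥0∞)

/-- The action `(Ac)(λ) = ∑_{λ'} a(λ,λ') c(λ')` of a matrix on sequences. -/
noncomputable def matApply {d : ℕ} {Λ Λ' : Set (Fin d → ℝ)}
    (a : Λ → Λ' → ℂ) (c : Λ' → ℂ) : Λ → ℂ :=
  fun l => ∑' l' : Λ', a l l' * c l'

/-- The `ℓ^p` norm (valued in `ℝ≥0∞`) of an `ℝ≥0∞`-valued family:
for `p = ∞` it is the supremum, otherwise `(∑ f i ^ p)^(1/p)`. -/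
noncomputable def seqNormE {ι : Type*} (p : ℝ≥0∞) (f : ι → ℝ≥0∞) : ℝ≥0∞ :=
  if p = ∞ then ⨆ i, f i else (∑' i, f i ^ p.toReal) ^ (1 / p.toReal)

/-- The `ℓ^p` norm (valued in `ℝ≥0∞`) of a complex-valued family. -/
noncomputable def seqNorm {ι : Type*} (p : ℝ≥0∞) (f : ι → ℂ) : ℝ≥0∞ :=
  seqNormE p fun i => (‖f i‖₊ : ℝ≥0∞)

/-- An operator `A` between sequence spaces has `ℓ^p`-stability if there is a
positive finite constant `C` with `C⁻¹ ‖c‖_p ≤ ‖A c‖_p ≤ C ‖c‖_p` for every `c ∈ ℓ^p`. -/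
def HasStability {ι κ : Type*} (p : ℝ≥0∞) (A : (ι → ℂ) → κ → ℂ) : Prop :=
  ∃ C : ℝ≥0∞, 0 < C ∧ C < ∞ ∧
    ∀ c : ι → ℂ, seqNorm p c < ∞ →
      C⁻¹ * seqNorm p c ≤ seqNorm p (A c) ∧ seqNorm p (A c) ≤ C * seqNorm p c

/-- The truncation `A_s` of a matrix: entries with `‖λ - λ'‖_∞ ≥ s` are set to zero. -/
noncomputable def truncMat {d : ℕ} {Λ Λ' : Set (Fin d → ℝ)} (s : ℝ)
    (a : Λ → Λ' → ℂ) : Λ → Λ' → ℂ :=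
  fun l l' => if ‖(l : Fin d → ℝ) - (l' : Fin d → ℝ)‖ < s then a l l' else 0

/-- The cut-off function `ψ(x) = min(max(2 - ‖x‖_∞, 0), 1)` on `ℝ^d`
(the norm on `Fin d → ℝ` is the sup-norm `‖·‖_∞`). -/
noncomputable def psiCut {d : ℕ} (x : Fin d → ℝ) : ℝ :=
  min (max (2 - ‖x‖) 0) 1

/-- The multiplication operator `Ψ_n^N` with `n = N k ∈ N ℤ^d`:
`(Ψ_n^N c)(λ) = ψ((λ - n)/N) c(λ)`. -/
noncomputable def psiOp {d : ℕ} {Λ : Set (Fin d → ℝ)} (N : ℕ) (k : Fin d → ℤ)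
    (c : Λ → ℂ) : Λ → ℂ :=
  fun l => (psiCut (fun i => ((l : Fin d → ℝ) i - (N : ℝ) * (k i : ℝ)) / (N : ℝ)) : ℂ) * c l

open MeasureTheory

section Helpers
open Classical in
/-- regroup a sum over Λ by an integer-valued function -/
lemma tsum_grp {α : Type*} {d : ℕ} (fl : α → (Fin d → ℤ)) (g : (Fin d → ℤ) → ℝ≥0∞) :
    ∑' l : α, g (fl l) = ∑' k, g k * ∑' l : α, (if fl l = k then 1 else 0) := by
  classical
  have h1 : ∀ l : α, g (fl l) = ∑' k, (if fl l = k then g k else 0) := by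
    intro l
    exact ((tsum_eq_single (fl l) (fun k hk => if_neg (fun h => hk h.symm))).trans
      (if_pos rfl)).symm
  calc ∑' l, g (fl l) = ∑' l, ∑' k, (if fl l = k then g k else 0) := tsum_congr h1
    _ = ∑' k, ∑' l, (if fl l = k then g k else 0) := ENNReal.tsum_comm
    _ = ∑' k, g k * ∑' l : α, (if fl l = k then 1 else 0) := by
        refine tsum_congr fun k => ?_
        rw [← ENNReal.tsum_mul_left]
        exact tsum_congr fun l => by split <;> simp

open Classical in
lemma count_cube_fwd {d : ℕ} (Λ' : Set (Fin d → ℝ)) (x : Fin d → ℝ) :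
    ∑' l' : Λ', (if x - (l' : Fin d → ℝ) ∈ unitCube 0 then (1:ℝ≥0∞) else 0) ≤ relSep Λ' := by
  have : (fun l' : Λ' => (if x - (l' : Fin d → ℝ) ∈ unitCube 0 then (1:ℝ≥0∞) else 0))
      = fun l' : Λ' => (unitCube (0 : Fin d → ℤ)).indicator (fun _ => (1:ℝ≥0∞))
        (x - (l' : Fin d → ℝ)) := by
    funext l'; rw [Set.indicator_apply]
  rw [this]
  exact le_iSup (fun x => ∑' l' : Λ', (unitCube (0 : Fin d → ℤ)).indicator
    (fun _ => (1:ℝ≥0∞)) (x - (l' : Fin d → ℝ))) x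

open Classical in
lemma count_cube {d : ℕ} (Λ : Set (Fin d → ℝ)) (c : Fin d → ℝ) :
    ∑' l : Λ, (if (∀ i, c i ≤ (l : Fin d → ℝ) i ∧ (l : Fin d → ℝ) i < c i + 1)
      then (1:ℝ≥0∞) else 0) ≤ 2^d * relSep Λ := by
  classical
  have key : ∀ l : Λ, (if (∀ i, c i ≤ (l : Fin d → ℝ) i ∧ (l : Fin d → ℝ) i < c i + 1)
      then (1:ℝ≥0∞) else 0) ≤ ∑ ε ∈ (Finset.univ : Finset (Fin d → Bool)),
        (if (fun i => c i + (if ε i then 1 else 0)) - (l : Fin d → ℝ) ∈ unitCube 0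
          then (1:ℝ≥0∞) else 0) := by
    intro l
    split
    · rename_i hl
      set ε : Fin d → Bool := fun i => decide (c i < (l : Fin d → ℝ) i) with hε
      have hmem : (fun i => c i + (if ε i then 1 else 0)) - (l : Fin d → ℝ) ∈
          unitCube (0 : Fin d → ℤ) := by
        intro i
        have h1 := (hl i).1
        have h2 := (hl i).2
        simp only [Pi.sub_apply, Pi.zero_apply, Int.cast_zero, hε]
        by_cases hci : c i < (l : Fin d → ℝ) i
        · simp [hci]; constructor <;> [linarith; linarith]
        · simp [hci]; constructor <;> [linarith; linarith]
      calc (1:ℝ≥0∞) = (if (fun i => c i + (if ε i then 1 else 0)) - (l : Fin d → ℝ) ∈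
            unitCube (0 : Fin d → ℤ) then (1:ℝ≥0∞) else 0) := by rw [if_pos hmem]
        _ ≤ _ := Finset.single_le_sum (f := fun ε' : Fin d → Bool =>
            (if (fun i => c i + (if ε' i then 1 else 0)) - (l : Fin d → ℝ) ∈ unitCube 0
              then (1:ℝ≥0∞) else 0)) (fun _ _ => zero_le) (Finset.mem_univ ε)
    · exact zero_le
  calc ∑' l : Λ, (if (∀ i, c i ≤ (l : Fin d → ℝ) i ∧ (l : Fin d → ℝ) i < c i + 1)
        then (1:ℝ≥0∞) else 0)
      ≤ ∑' l : Λ, ∑ ε ∈ (Finset.univ : Finset (Fin d → Bool)),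
        (if (fun i => c i + (if ε i then 1 else 0)) - (l : Fin d → ℝ) ∈ unitCube 0
          then (1:ℝ≥0∞) else 0) := ENNReal.tsum_le_tsum key
    _ = ∑ ε ∈ (Finset.univ : Finset (Fin d → Bool)), ∑' l : Λ,
        (if (fun i => c i + (if ε i then 1 else 0)) - (l : Fin d → ℝ) ∈ unitCube 0
          then (1:ℝ≥0∞) else 0) := Summable.tsum_finsetSum (fun _ _ => ENNReal.summable)
    _ ≤ ∑ ε ∈ (Finset.univ : Finset (Fin d → Bool)), relSep Λ :=
        Finset.sum_le_sum fun ε _ => count_cube_fwd Λ _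
    _ = 2^d * relSep Λ := by
        rw [Finset.sum_const, Finset.card_univ]
        simp [nsmul_eq_mul, Fintype.card_fun]


noncomputable def Wk {d : ℕ} {Λ Λ' : Set (Fin d → ℝ)} (a : Λ → Λ' → ℂ) (k : Fin d → ℤ) : ℝ≥0∞ :=
  ⨆ (l : Λ) (l' : Λ')
    (_ : (l : Fin d → ℝ) - (l' : Fin d → ℝ) ∈ unitCube k), (‖a l l'‖₊ : ℝ≥0∞)

lemma sjNorm_eq {d : ℕ} {Λ Λ' : Set (Fin d → ℝ)} (a : Λ → Λ' → ℂ) :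
    sjNorm a = ∑' k, Wk a k := rfl

lemma entry_le_Wk {d : ℕ} {Λ Λ' : Set (Fin d → ℝ)} (a : Λ → Λ' → ℂ) (l : Λ) (l' : Λ')
    {k : Fin d → ℤ} (h : (l : Fin d → ℝ) - (l' : Fin d → ℝ) ∈ unitCube k) :
    (‖a l l'‖₊ : ℝ≥0∞) ≤ Wk a k :=
  le_iSup_of_le l (le_iSup_of_le l' (le_iSup_of_le h le_rfl))

lemma mem_cube_floor {d : ℕ} (x : Fin d → ℝ) : x ∈ unitCube (fun i => ⌊x i⌋) :=
  fun i => ⟨Int.floor_le _, Int.lt_floor_add_one _⟩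

lemma entry_le_sjNorm {d : ℕ} {Λ Λ' : Set (Fin d → ℝ)} (a : Λ → Λ' → ℂ) (l : Λ) (l' : Λ') :
    (‖a l l'‖₊ : ℝ≥0∞) ≤ sjNorm a :=
  (entry_le_Wk a l l' (mem_cube_floor _)).trans (by rw [sjNorm_eq]; exact ENNReal.le_tsum _)

open Classical in
lemma rowsum_le {d : ℕ} {Λ Λ' : Set (Fin d → ℝ)} (b : Λ → Λ' → ℂ) (l : Λ) :
    ∑' l' : Λ', (‖b l l'‖₊ : ℝ≥0∞) ≤ relSep Λ' * sjNorm b := by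
  classical
  set fl : Λ' → (Fin d → ℤ) := fun l' i => ⌊(l : Fin d → ℝ) i - (l' : Fin d → ℝ) i⌋ with hfl
  calc ∑' l' : Λ', (‖b l l'‖₊ : ℝ≥0∞)
      ≤ ∑' l' : Λ', Wk b (fl l') := ENNReal.tsum_le_tsum fun l' =>
        entry_le_Wk b l l' (fun i => by
          simp only [Pi.sub_apply, hfl]
          exact ⟨Int.floor_le _, Int.lt_floor_add_one _⟩)
    _ = ∑' k, Wk b k * ∑' l' : Λ', (if fl l' = k then 1 else 0) := tsum_grp fl _
    _ ≤ ∑' k, Wk b k * relSep Λ' := by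
        refine ENNReal.tsum_le_tsum fun k => mul_le_mul_right ?_ _
        have : ∀ l' : Λ', (if fl l' = k then (1:ℝ≥0∞) else 0) =
            (if (fun i => (l : Fin d → ℝ) i - (k i : ℝ)) - (l' : Fin d → ℝ) ∈ unitCube 0
              then (1:ℝ≥0∞) else 0) := by
          intro l'
          refine if_congr ?_ rfl rfl
          rw [funext_iff]
          constructor
          · intro h i
            have := h i
            rw [hfl] at this
            simp only at this
            rw [Int.floor_eq_iff] at this
            simp only [Pi.sub_apply, Pi.zero_apply, Int.cast_zero]
            push_cast at this ⊢
            constructor <;> [linarith [this.1]; linarith [this.2]]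
          · intro h i
            have := h i
            simp only [Pi.sub_apply, Pi.zero_apply, Int.cast_zero] at this
            rw [hfl]
            simp only
            rw [Int.floor_eq_iff]
            push_cast
            constructor <;> [linarith [this.1]; linarith [this.2]]
        rw [tsum_congr this]
        exact count_cube_fwd Λ' _
    _ = relSep Λ' * sjNorm b := by
        rw [ENNReal.tsum_mul_right, sjNorm_eq, mul_comm]

open Classical in
lemma colsum_le {d : ℕ} {Λ Λ' : Set (Fin d → ℝ)} (b : Λ → Λ' → ℂ) (l' : Λ') :
    ∑' l : Λ, (‖b l l'‖₊ : ℝ≥0∞) ≤ 2^d * relSep Λ * sjNorm b := by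
  classical
  set fl : Λ → (Fin d → ℤ) := fun l i => ⌊(l : Fin d → ℝ) i - (l' : Fin d → ℝ) i⌋ with hfl
  calc ∑' l : Λ, (‖b l l'‖₊ : ℝ≥0∞)
      ≤ ∑' l : Λ, Wk b (fl l) := ENNReal.tsum_le_tsum fun l =>
        entry_le_Wk b l l' (fun i => by
          simp only [Pi.sub_apply, hfl]
          exact ⟨Int.floor_le _, Int.lt_floor_add_one _⟩)
    _ = ∑' k, Wk b k * ∑' l : Λ, (if fl l = k then 1 else 0) := tsum_grp fl _
    _ ≤ ∑' k, Wk b k * (2^d * relSep Λ) := by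
        refine ENNReal.tsum_le_tsum fun k => mul_le_mul_right ?_ _
        have : ∀ l : Λ, (if fl l = k then (1:ℝ≥0∞) else 0) =
            (if (∀ i, ((l' : Fin d → ℝ) i + (k i : ℝ)) ≤ (l : Fin d → ℝ) i ∧
                (l : Fin d → ℝ) i < ((l' : Fin d → ℝ) i + (k i : ℝ)) + 1)
              then (1:ℝ≥0∞) else 0) := by
          intro l
          refine if_congr ?_ rfl rfl
          rw [funext_iff]
          constructor
          · intro h i
            have := h i
            rw [hfl] at this
            simp only at this
            rw [Int.floor_eq_iff] at this
            push_cast at this ⊢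
            constructor <;> [linarith [this.1]; linarith [this.2]]
          · intro h i
            have := h i
            rw [hfl]
            simp only
            rw [Int.floor_eq_iff]
            push_cast
            constructor <;> [linarith [this.1]; linarith [this.2]]
        rw [tsum_congr this]
        exact count_cube Λ _
    _ = 2^d * relSep Λ * sjNorm b := by
        rw [ENNReal.tsum_mul_right, sjNorm_eq, mul_comm]

lemma psiCut_nonneg {d : ℕ} (x : Fin d → ℝ) : 0 ≤ psiCut x :=
  le_min (le_max_right _ _) zero_le_one

lemma psiCut_le_one {d : ℕ} (x : Fin d → ℝ) : psiCut x ≤ 1 := min_le_right _ _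

lemma psiCut_eq_one {d : ℕ} {x : Fin d → ℝ} (h : ‖x‖ ≤ 1) : psiCut x = 1 := by
  unfold psiCut
  rw [max_eq_left (by linarith), min_eq_right (by linarith)]

lemma psiCut_eq_zero {d : ℕ} {x : Fin d → ℝ} (h : 2 ≤ ‖x‖) : psiCut x = 0 := by
  unfold psiCut
  rw [max_eq_right (by linarith), min_eq_left zero_le_one]

lemma real_cutoff_lip (a b : ℝ) :
    |min (max (2 - a) 0) 1 - min (max (2 - b) 0) 1| ≤ |a - b| := by
  rw [abs_le]
  rcases abs_cases (a - b) with ⟨h1, h2⟩ | ⟨h1, h2⟩ <;>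
    constructor <;> simp only [min_def, max_def] <;> split_ifs <;> linarith

lemma psiCut_lip {d : ℕ} (x y : Fin d → ℝ) : |psiCut x - psiCut y| ≤ ‖x - y‖ :=
  (real_cutoff_lip ‖x‖ ‖y‖).trans (abs_norm_sub_norm_le x y)

/-- the scaled cutoff `φ_k(x) = ψ((x - Nk)/N)` -/
noncomputable def phiN {d : ℕ} (N : ℕ) (k : Fin d → ℤ) (x : Fin d → ℝ) : ℝ :=
  psiCut (fun i => (x i - (N : ℝ) * (k i : ℝ)) / (N : ℝ))

lemma psiOp_eq {d : ℕ} {Λ : Set (Fin d → ℝ)} (N : ℕ) (k : Fin d → ℤ) (c : Λ → ℂ) (l : Λ) :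
    psiOp N k c l = (phiN N k (l : Fin d → ℝ) : ℂ) * c l := rfl

lemma phiN_diff_le {d : ℕ} {N : ℕ} (hN : 1 ≤ N) (k : Fin d → ℤ) (x y : Fin d → ℝ) :
    |phiN N k x - phiN N k y| ≤ ‖x - y‖ / N := by
  have hN0 : (0:ℝ) < N := by exact_mod_cast hN
  refine (psiCut_lip _ _).trans ?_
  have : (fun i => (x i - (N : ℝ) * (k i : ℝ)) / (N : ℝ)) -
      (fun i => (y i - (N : ℝ) * (k i : ℝ)) / (N : ℝ)) = ((N:ℝ))⁻¹ • (x - y) := by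
    funext i
    simp [Pi.sub_apply]
    ring
  rw [this, norm_smul]
  simp [abs_of_pos (inv_pos.mpr hN0), div_eq_inv_mul]

lemma phiN_pos_norm {d : ℕ} {N : ℕ} (hN : 1 ≤ N) {k : Fin d → ℤ} {x : Fin d → ℝ}
    (h : phiN N k x ≠ 0) : ‖x - (fun i => (N:ℝ) * (k i : ℝ))‖ < 2 * N := by
  have hN0 : (0:ℝ) < N := by exact_mod_cast hN
  by_contra hc
  push_neg at hc
  apply h
  apply psiCut_eq_zero
  have : (fun i => (x i - (N : ℝ) * (k i : ℝ)) / (N : ℝ)) =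
      ((N:ℝ))⁻¹ • (x - fun i => (N:ℝ) * (k i : ℝ)) := by
    funext i; simp [Pi.sub_apply]; ring
  rw [this, norm_smul]
  have h2 : ‖((N:ℝ))⁻¹‖ = ((N:ℝ))⁻¹ := by
    rw [Real.norm_eq_abs]; exact abs_of_pos (inv_pos.mpr hN0)
  rw [h2]
  calc (2:ℝ) = (N:ℝ)⁻¹ * (2*N) := by field_simp
    _ ≤ (N:ℝ)⁻¹ * ‖x - fun i => (N:ℝ) * (k i : ℝ)‖ :=
        mul_le_mul_of_nonneg_left hc (inv_pos.mpr hN0).le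


/-- the selection finset for shifts -/
noncomputable def shiftF (d : ℕ) : Finset (Fin d → ℤ) :=
  Fintype.piFinset fun _ => Finset.Icc (-3 : ℤ) 3

lemma card_shiftF (d : ℕ) : (shiftF d).card = 7^d := by
  rw [shiftF, Fintype.card_piFinset]
  simp [Int.card_Icc]

/-- selection of a shift `m` with `φ_{k+m}(x) = 1` -/
lemma exists_shift {d : ℕ} {N : ℕ} (hN : 1 ≤ N) {k : Fin d → ℤ} {x : Fin d → ℝ}
    (h : ‖x - (fun i => (N:ℝ) * (k i : ℝ))‖ < 3 * N) :
    ∃ m ∈ shiftF d, phiN N (k + m) x = 1 := by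
  have hN0 : (0:ℝ) < N := by exact_mod_cast hN
  set m : Fin d → ℤ := fun i => round ((x i - (N:ℝ) * (k i : ℝ)) / N) with hm
  have hco : ∀ i, |x i - (N:ℝ) * (k i : ℝ)| < 3 * N := by
    intro i
    have := (pi_norm_lt_iff (by positivity)).mp h i
    simpa using this
  refine ⟨m, ?_, ?_⟩
  · rw [shiftF, Fintype.mem_piFinset]
    intro i
    rw [Finset.mem_Icc, ← abs_le]
    have h1 : |(x i - (N:ℝ) * (k i : ℝ)) / N| < 3 := by
      rw [abs_div, abs_of_pos hN0, div_lt_iff₀ hN0]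
      linarith [hco i]
    have h2 : |((m i : ℝ))| ≤ |(x i - (N:ℝ) * (k i : ℝ)) / N| + 1/2 := by
      have := abs_sub_round ((x i - (N:ℝ) * (k i : ℝ)) / N)
      rw [hm]
      simp only
      calc |((round ((x i - (N:ℝ) * (k i : ℝ)) / N) : ℤ) : ℝ)|
          ≤ |(x i - (N:ℝ) * (k i : ℝ)) / N| +
            |(x i - (N:ℝ) * (k i : ℝ)) / N - (round ((x i - (N:ℝ) * (k i : ℝ)) / N) : ℝ)| := by
            have := abs_add_le ((x i - (N:ℝ) * (k i : ℝ)) / N)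
              (((round ((x i - (N:ℝ) * (k i : ℝ)) / N) : ℤ) : ℝ) - (x i - (N:ℝ) * (k i : ℝ)) / N)
            simp only [add_sub_cancel] at this
            calc |((round ((x i - (N:ℝ) * (k i : ℝ)) / N) : ℤ) : ℝ)|
                ≤ |(x i - (N:ℝ) * (k i : ℝ)) / N| +
                  |((round ((x i - (N:ℝ) * (k i : ℝ)) / N) : ℤ) : ℝ) -
                    (x i - (N:ℝ) * (k i : ℝ)) / N| := this
              _ = _ := by rw [abs_sub_comm]
        _ ≤ _ := by linarith [abs_sub_round ((x i - (N:ℝ) * (k i : ℝ)) / N)]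
    have h3 : |((m i : ℝ))| < 4 := by linarith
    have h4 : ((|m i| : ℤ) : ℝ) < ((4:ℤ):ℝ) := by rw [Int.cast_abs]; push_cast; exact h3
    have h5 : |m i| < 4 := by exact_mod_cast h4
    omega
  · apply psiCut_eq_one
    rw [pi_norm_le_iff_of_nonneg zero_le_one]
    intro i
    have habs := abs_sub_round ((x i - (N:ℝ) * (k i : ℝ)) / N)
    simp only [Pi.add_apply]
    push_cast
    rw [Real.norm_eq_abs]
    have : (x i - (N:ℝ) * ((k i : ℝ) + (m i : ℝ))) / N
        = (x i - (N:ℝ) * (k i : ℝ)) / N - (m i : ℝ) := by field_simp; ring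
    rw [this, hm]
    simp only
    linarith

lemma tsum_count {ι : Type*} (f : ι → ℝ≥0∞) :
    (∫⁻ i, f i ∂(@Measure.count ι ⊤)) = ∑' i, f i := by
  letI : MeasurableSpace ι := ⊤
  haveI : MeasurableSingletonClass ι := ⟨fun _ => trivial⟩
  exact lintegral_count f

lemma tsum_holder {ι : Type*} (f g : ι → ℝ≥0∞) {r s : ℝ} (h : r.HolderConjugate s) :
    ∑' i, f i * g i ≤ (∑' i, f i ^ r) ^ (1/r) * (∑' i, g i ^ s) ^ (1/s) := by
  letI : MeasurableSpace ι := ⊤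
  have := ENNReal.lintegral_mul_le_Lp_mul_Lq (@Measure.count ι ⊤) h
    (measurable_from_top (f := f)).aemeasurable (measurable_from_top (f := g)).aemeasurable
  simpa [tsum_count] using this

lemma tsum_minkowski {ι : Type*} (f g : ι → ℝ≥0∞) {r : ℝ} (hr : 1 ≤ r) :
    (∑' i, (f i + g i) ^ r) ^ (1/r) ≤ (∑' i, f i ^ r) ^ (1/r) + (∑' i, g i ^ r) ^ (1/r) := by
  letI : MeasurableSpace ι := ⊤
  have := ENNReal.lintegral_Lp_add_le (μ := @Measure.count ι ⊤)
    (measurable_from_top (f := f)).aemeasurable (measurable_from_top (f := g)).aemeasurable hr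
  simpa [tsum_count] using this

lemma seqNormE_mono {ι : Type*} (p : ℝ≥0∞) {f g : ι → ℝ≥0∞} (h : ∀ i, f i ≤ g i) :
    seqNormE p f ≤ seqNormE p g := by
  unfold seqNormE; split
  · exact iSup_mono h
  · exact ENNReal.rpow_le_rpow (ENNReal.tsum_le_tsum fun i =>
      ENNReal.rpow_le_rpow (h i) ENNReal.toReal_nonneg)
      (div_nonneg zero_le_one ENNReal.toReal_nonneg)

lemma one_le_toReal {p : ℝ≥0∞} (hp : 1 ≤ p) (hp' : p ≠ ∞) : 1 ≤ p.toReal := by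
  rw [← ENNReal.toReal_one]; exact ENNReal.toReal_mono hp' hp

lemma seqNormE_add_le {ι : Type*} (p : ℝ≥0∞) (hp : 1 ≤ p) (f g : ι → ℝ≥0∞) :
    seqNormE p (fun i => f i + g i) ≤ seqNormE p f + seqNormE p g := by
  unfold seqNormE; split
  · exact iSup_le fun i => add_le_add (le_iSup f i) (le_iSup g i)
  · exact tsum_minkowski f g (one_le_toReal hp (by assumption))

lemma seqNormE_mul_le {ι : Type*} (p : ℝ≥0∞) (hp : 1 ≤ p) (C : ℝ≥0∞) (f : ι → ℝ≥0∞) :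
    seqNormE p (fun i => C * f i) ≤ C * seqNormE p f := by
  unfold seqNormE; split
  · exact iSup_le fun i => mul_le_mul_right (le_iSup f i) C
  · rename_i hne
    have hr : p.toReal ≠ 0 := by
      have := one_le_toReal hp hne; positivity
    calc (∑' i, (C * f i) ^ p.toReal) ^ (1/p.toReal)
        = (C ^ p.toReal * ∑' i, f i ^ p.toReal) ^ (1/p.toReal) := by
          rw [← ENNReal.tsum_mul_left]
          congr 1
          exact tsum_congr fun i => ENNReal.mul_rpow_of_nonneg _ _ ENNReal.toReal_nonneg
      _ = C * (∑' i, f i ^ p.toReal) ^ (1/p.toReal) := by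
          rw [ENNReal.mul_rpow_of_nonneg _ _ (by positivity), ← ENNReal.rpow_mul,
            mul_one_div_cancel hr, ENNReal.rpow_one]
      _ ≤ C * (∑' i, f i ^ p.toReal) ^ (1/p.toReal) := le_rfl

lemma seqNormE_sum_le {ι β : Type*} (p : ℝ≥0∞) (hp : 1 ≤ p) (F : Finset β)
    (f : β → ι → ℝ≥0∞) :
    seqNormE p (fun i => ∑ m ∈ F, f m i) ≤ ∑ m ∈ F, seqNormE p (f m) := by
  classical
  induction F using Finset.induction with
  | empty =>
      simp only [Finset.sum_empty]
      unfold seqNormE; split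
      · simp
      · rename_i hne
        have h1 := one_le_toReal hp hne
        simp only []
        rw [show (∑' (_ : ι), (0:ℝ≥0∞) ^ p.toReal) = 0 by
          simp [ENNReal.zero_rpow_of_pos (show (0:ℝ) < p.toReal by positivity)]]
        rw [ENNReal.zero_rpow_of_pos (by positivity)]
  | insert b F' hm ih =>
      calc seqNormE p (fun i => ∑ m ∈ insert b F', f m i)
          = seqNormE p (fun i => f b i + ∑ m ∈ F', f m i) := by
            congr 1; ext i; rw [Finset.sum_insert hm]
        _ ≤ seqNormE p (f b) + seqNormE p (fun i => ∑ m ∈ F', f m i) :=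
            seqNormE_add_le p hp _ _
        _ ≤ _ := by rw [Finset.sum_insert hm]; exact add_le_add le_rfl ih

lemma seqNormE_comp_equiv {ι κ : Type*} (p : ℝ≥0∞) (e : ι ≃ κ) (f : κ → ℝ≥0∞) :
    seqNormE p (fun i => f (e i)) = seqNormE p f := by
  unfold seqNormE; split
  · exact e.iSup_congr (fun i => rfl)
  · rw [e.tsum_eq (fun k => f k ^ p.toReal)]

lemma schur {ι κ : Type*} (p : ℝ≥0∞) (hp : 1 ≤ p) (w : ι → κ → ℝ≥0∞) (Rr Rc : ℝ≥0∞)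
    (hrow : ∀ i, ∑' j, w i j ≤ Rr) (hcol : ∀ j, ∑' i, w i j ≤ Rc) (v : κ → ℝ≥0∞) :
    seqNormE p (fun i => ∑' j, w i j * v j) ≤
      Rc ^ (1/p.toReal) * Rr ^ (1 - 1/p.toReal) * seqNormE p v := by
  by_cases htop : p = ∞
  · subst htop
    simp only [seqNormE, if_pos rfl, ENNReal.toReal_top, div_zero, ENNReal.rpow_zero,
      one_mul, sub_zero, ENNReal.rpow_one]
    refine iSup_le fun i => ?_
    calc ∑' j, w i j * v j ≤ ∑' j, w i j * ⨆ k, v k :=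
          ENNReal.tsum_le_tsum fun j => mul_le_mul_right (le_iSup v j) _
      _ = (∑' j, w i j) * ⨆ k, v k := ENNReal.tsum_mul_right
      _ ≤ Rr * ⨆ k, v k := mul_le_mul_left (hrow i) _
  · set r := p.toReal with hrdef
    have hr1 : 1 ≤ r := one_le_toReal hp htop
    have hr0 : 0 < r := lt_of_lt_of_le one_pos hr1
    simp only [seqNormE, if_neg htop]
    rcases eq_or_lt_of_le hr1 with hr1' | hr1'
    · -- r = 1
      have h1 : p.toReal = 1 := hr1'.symm
      simp only [h1, ← hr1', ENNReal.rpow_one, div_one, sub_self, ENNReal.rpow_zero, mul_one]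
      calc ∑' i, ∑' j, w i j * v j = ∑' j, ∑' i, w i j * v j := ENNReal.tsum_comm
        _ = ∑' j, (∑' i, w i j) * v j := by
            refine tsum_congr fun j => ?_; rw [ENNReal.tsum_mul_right]
        _ ≤ ∑' j, Rc * v j := ENNReal.tsum_le_tsum fun j =>
            mul_le_mul_left (hcol j) _
        _ = Rc * ∑' j, v j := ENNReal.tsum_mul_left
    · -- 1 < r
      have hconj : r.HolderConjugate (Real.conjExponent r) := Real.HolderConjugate.conjExponent hr1'
      set s := Real.conjExponent r with hsdef
      have hs0 : 0 < s := hconj.symm.pos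
      have hinv : 1/s = 1 - 1/r := by
        have := hconj.inv_add_inv_eq_one
        rw [one_div, one_div]; linarith
      have key : ∀ i, ∑' j, w i j * v j ≤ Rr ^ (1/s) * (∑' j, w i j * v j ^ r) ^ (1/r) := by
        intro i
        have hsplit : ∀ j, w i j * v j = (w i j ^ (1/s)) * (w i j ^ (1/r) * v j) := by
          intro j
          rw [← mul_assoc, ← ENNReal.rpow_add_of_nonneg _ _ (by positivity) (by positivity),
            show 1/s + 1/r = 1 by rw [one_div, one_div]; exact hconj.symm.inv_add_inv_eq_one,
            ENNReal.rpow_one]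
        calc ∑' j, w i j * v j
            = ∑' j, (w i j ^ (1/s)) * (w i j ^ (1/r) * v j) := tsum_congr hsplit
          _ ≤ (∑' j, (w i j ^ (1/s)) ^ s) ^ (1/s) * (∑' j, (w i j ^ (1/r) * v j) ^ r) ^ (1/r) :=
              tsum_holder _ _ hconj.symm
          _ = (∑' j, w i j) ^ (1/s) * (∑' j, w i j * v j ^ r) ^ (1/r) := by
              congr 2
              · exact tsum_congr fun j => by
                  rw [← ENNReal.rpow_mul, one_div_mul_cancel hs0.ne', ENNReal.rpow_one]
              · exact tsum_congr fun j => by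
                  rw [ENNReal.mul_rpow_of_nonneg _ _ hr0.le, ← ENNReal.rpow_mul,
                    one_div_mul_cancel hr0.ne', ENNReal.rpow_one]
          _ ≤ Rr ^ (1/s) * (∑' j, w i j * v j ^ r) ^ (1/r) := by
              gcongr
              exact hrow i
      calc (∑' i, (∑' j, w i j * v j) ^ r) ^ (1/r)
          ≤ (∑' i, (Rr ^ (1/s) * (∑' j, w i j * v j ^ r) ^ (1/r)) ^ r) ^ (1/r) := by
            gcongr with i
            exact key i
        _ = (Rr ^ ((1/s)*r) * ∑' i, ∑' j, w i j * v j ^ r) ^ (1/r) := by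
            congr 1
            rw [← ENNReal.tsum_mul_left]
            refine tsum_congr fun i => ?_
            rw [ENNReal.mul_rpow_of_nonneg _ _ hr0.le, ← ENNReal.rpow_mul,
              ← ENNReal.rpow_mul, one_div_mul_cancel hr0.ne', ENNReal.rpow_one]
        _ ≤ (Rr ^ ((1/s)*r) * (Rc * ∑' j, v j ^ r)) ^ (1/r) := by
            gcongr
            calc ∑' i, ∑' j, w i j * v j ^ r = ∑' j, ∑' i, w i j * v j ^ r := ENNReal.tsum_comm
              _ = ∑' j, (∑' i, w i j) * v j ^ r := tsum_congr fun j => ENNReal.tsum_mul_right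
              _ ≤ ∑' j, Rc * v j ^ r := ENNReal.tsum_le_tsum fun j =>
                  mul_le_mul_left (hcol j) _
              _ = Rc * ∑' j, v j ^ r := ENNReal.tsum_mul_left
        _ = Rc ^ (1/r) * Rr ^ (1 - 1/r) * (∑' j, v j ^ r) ^ (1/r) := by
            rw [ENNReal.mul_rpow_of_nonneg _ _ (by positivity),
              ENNReal.mul_rpow_of_nonneg _ _ (by positivity), ← ENNReal.rpow_mul]
            rw [show (1/s)*r*(1/r) = 1/s by
              rw [mul_assoc, mul_one_div, div_self hr0.ne', mul_one], hinv]
            ring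

lemma relSep_pos {d : ℕ} {Λ : Set (Fin d → ℝ)} (hne : Nonempty Λ) : 1 ≤ relSep Λ := by
  classical
  obtain ⟨l⟩ := hne
  refine le_trans ?_ (le_iSup _ (l : Fin d → ℝ))
  have : (unitCube (0 : Fin d → ℤ)).indicator (fun _ => (1:ℝ≥0∞))
      ((l : Fin d → ℝ) - (l : Fin d → ℝ)) = 1 := by
    rw [Set.indicator_apply, if_pos]
    intro i
    simp
  calc (1:ℝ≥0∞) = (unitCube (0 : Fin d → ℤ)).indicator (fun _ => (1:ℝ≥0∞))
        ((l : Fin d → ℝ) - (l : Fin d → ℝ)) := this.symm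
    _ ≤ _ := ENNReal.le_tsum l

lemma seqNormE_zero {ι : Type*} (p : ℝ≥0∞) (hp : 1 ≤ p) :
    seqNormE p (fun _ : ι => (0:ℝ≥0∞)) = 0 := by
  unfold seqNormE; split
  · simp
  · rename_i hne
    have h1 := one_le_toReal hp hne
    rw [show (∑' (_ : ι), (0:ℝ≥0∞) ^ p.toReal) = 0 by
      simp [ENNReal.zero_rpow_of_pos (show (0:ℝ) < p.toReal by positivity)]]
    rw [ENNReal.zero_rpow_of_pos (by positivity)]

lemma le_seqNormE {ι : Type*} (p : ℝ≥0∞) (hp : 1 ≤ p) (f : ι → ℝ≥0∞) (j : ι) :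
    f j ≤ seqNormE p f := by
  unfold seqNormE; split
  · exact le_iSup f j
  · rename_i hne
    have h1 := one_le_toReal hp hne
    have hr0 : p.toReal ≠ 0 := by positivity
    calc f j = (f j ^ p.toReal) ^ (1/p.toReal) := by
          rw [← ENNReal.rpow_mul, mul_one_div_cancel hr0, ENNReal.rpow_one]
      _ ≤ _ := ENNReal.rpow_le_rpow (ENNReal.le_tsum j) (by positivity)

lemma seqNormE_shift {d : ℕ} (q : ℝ≥0∞) (g : (Fin d → ℤ) → ℝ≥0∞) (m : Fin d → ℤ) :
    seqNormE q (fun k => g (k + m)) = seqNormE q g := by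
  have h : (fun k : Fin d → ℤ => g (k + m)) = fun k : Fin d → ℤ => g ((Equiv.addRight m) k) :=
    rfl
  rw [h]
  exact seqNormE_comp_equiv q (Equiv.addRight m) g

lemma phiN_nonneg {d : ℕ} (N : ℕ) (k : Fin d → ℤ) (x : Fin d → ℝ) : 0 ≤ phiN N k x :=
  psiCut_nonneg _

lemma phiN_le_one {d : ℕ} (N : ℕ) (k : Fin d → ℤ) (x : Fin d → ℝ) : phiN N k x ≤ 1 :=
  psiCut_le_one _

lemma phiN_abs_sub_le_one {d : ℕ} (N : ℕ) (k : Fin d → ℤ) (x y : Fin d → ℝ) :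
    |phiN N k x - phiN N k y| ≤ 1 := by
  rw [abs_le]
  constructor <;>
    linarith [phiN_nonneg N k x, phiN_le_one N k x, phiN_nonneg N k y, phiN_le_one N k y]

open Classical in
lemma core_bound {d : ℕ} (p : ℝ≥0∞) (hp : 1 ≤ p) {Λ Λ' : Set (Fin d → ℝ)}
    (hΛ' : relSep Λ' < ∞) (a : Λ → Λ' → ℂ) (ha : sjNorm a < ∞)
    {N : ℕ} (hN : 1 ≤ N) (c : Λ' → ℂ) (Mc : ℝ≥0∞) (hMc : Mc < ∞)
    (hcb : ∀ j, (‖c j‖₊ : ℝ≥0∞) ≤ Mc)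
    {s : ℝ} (hs0 : 0 ≤ s) (hsN : s ≤ (N:ℝ)) (k : Fin d → ℤ) :
    seqNorm p (fun l : Λ =>
        matApply (truncMat (N : ℝ) a) (psiOp N k c) l -
          psiOp N k (matApply (truncMat (N : ℝ) a) c) l) ≤
      2^d * relSep Λ ^ (1/p.toReal) * relSep Λ' ^ (1 - 1/p.toReal) *
        (sjNorm (fun l l' => a l l' - truncMat s a l l') + ENNReal.ofReal (s/N) * sjNorm a) *
        ∑ m ∈ shiftF d, seqNorm p (psiOp N (k+m) c) := by
  classical
  have hN0 : (0:ℝ) < N := by exact_mod_cast hN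
  set A2 : Λ → Λ' → ℂ := fun l l' => a l l' - truncMat s a l l' with hA2
  set Θ : ℝ≥0∞ := sjNorm A2 + ENNReal.ofReal (s/N) * sjNorm a with hΘ
  set u : Λ → Λ' → ℝ≥0∞ := fun l l' =>
    (‖A2 l l'‖₊ : ℝ≥0∞) + ENNReal.ofReal (s/N) * (‖a l l'‖₊ : ℝ≥0∞) with hu
  set W : Λ → Λ' → ℝ≥0∞ := fun l l' =>
    if ‖(l : Fin d → ℝ) - (l' : Fin d → ℝ)‖ < (N:ℝ) ∧
        phiN N k (l : Fin d → ℝ) ≠ phiN N k (l' : Fin d → ℝ) then u l l' else 0 with hW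
  set vψ : (Fin d → ℤ) → Λ' → ℝ≥0∞ := fun j l' => (‖psiOp N j c l'‖₊ : ℝ≥0∞) with hvψ
  have hWle : ∀ l l', W l l' ≤ u l l' := by
    intro l l'; rw [hW]; dsimp only; split
    · exact le_rfl
    · exact zero_le
  have husum_row : ∀ l : Λ, ∑' l', u l l' ≤ relSep Λ' * Θ := by
    intro l
    rw [hu]
    calc ∑' l', ((‖A2 l l'‖₊ : ℝ≥0∞) + ENNReal.ofReal (s/N) * (‖a l l'‖₊ : ℝ≥0∞))
        = (∑' l', (‖A2 l l'‖₊ : ℝ≥0∞)) +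
          ENNReal.ofReal (s/N) * ∑' l', (‖a l l'‖₊ : ℝ≥0∞) := by
          rw [ENNReal.tsum_add, ENNReal.tsum_mul_left]
      _ ≤ relSep Λ' * sjNorm A2 + ENNReal.ofReal (s/N) * (relSep Λ' * sjNorm a) := by
          gcongr
          · exact rowsum_le A2 l
          · exact rowsum_le a l
      _ = relSep Λ' * Θ := by rw [hΘ]; ring
  have husum_col : ∀ l' : Λ', ∑' l : Λ, u l l' ≤ 2^d * relSep Λ * Θ := by
    intro l'
    rw [hu]
    calc ∑' l : Λ, ((‖A2 l l'‖₊ : ℝ≥0∞) + ENNReal.ofReal (s/N) * (‖a l l'‖₊ : ℝ≥0∞))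
        = (∑' l : Λ, (‖A2 l l'‖₊ : ℝ≥0∞)) +
          ENNReal.ofReal (s/N) * ∑' l : Λ, (‖a l l'‖₊ : ℝ≥0∞) := by
          rw [ENNReal.tsum_add, ENNReal.tsum_mul_left]
      _ ≤ 2^d * relSep Λ * sjNorm A2 + ENNReal.ofReal (s/N) * (2^d * relSep Λ * sjNorm a) := by
          gcongr
          · exact colsum_le A2 l'
          · exact colsum_le a l'
      _ = 2^d * relSep Λ * Θ := by rw [hΘ]; ring
  have hrowW : ∀ l : Λ, ∑' l', W l l' ≤ relSep Λ' * Θ := fun l =>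
    (ENNReal.tsum_le_tsum fun l' => hWle l l').trans (husum_row l)
  have hcolW : ∀ l' : Λ', ∑' l : Λ, W l l' ≤ 2^d * relSep Λ * Θ := fun l' =>
    (ENNReal.tsum_le_tsum fun l => hWle l l').trans (husum_col l')
  have hb_le : ∀ (t : ℝ) (l : Λ) (l' : Λ'),
      (‖truncMat t a l l'‖₊ : ℝ≥0∞) ≤ (‖a l l'‖₊ : ℝ≥0∞) := by
    intro t l l'
    by_cases h : ‖(l : Fin d → ℝ) - (l' : Fin d → ℝ)‖ < t
    · rw [show truncMat t a l l' = a l l' from if_pos h]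
    · rw [show truncMat t a l l' = 0 from if_neg h]
      simp
  have hrowa : ∀ l : Λ, ∑' l', (‖a l l'‖₊ : ℝ≥0∞) < ∞ := by
    intro l
    exact lt_of_le_of_lt (rowsum_le a l) (ENNReal.mul_lt_top hΛ' ha)
  have hψnorm : ∀ (j : (Fin d → ℤ)) (l' : Λ'),
      vψ j l' = ENNReal.ofReal (phiN N j (l' : Fin d → ℝ)) * (‖c l'‖₊ : ℝ≥0∞) := by
    intro j l'
    simp only [hvψ]
    rw [psiOp_eq, nnnorm_mul, ENNReal.coe_mul, Complex.nnnorm_real,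
      ← enorm_eq_nnnorm (phiN N j (l' : Fin d → ℝ)), Real.enorm_eq_ofReal_abs, abs_of_nonneg (phiN_nonneg N j _)]
  have hDW : ∀ l : Λ,
      (‖matApply (truncMat (N : ℝ) a) (psiOp N k c) l -
        psiOp N k (matApply (truncMat (N : ℝ) a) c) l‖₊ : ℝ≥0∞) ≤
      ∑ m ∈ shiftF d, ∑' l', W l l' * vψ (k+m) l' := by
    intro l
    set φ : ℝ := phiN N k (l : Fin d → ℝ) with hφ
    set term : Λ' → ℂ := fun l' =>
      truncMat (N:ℝ) a l l' * psiOp N k c l' - (φ : ℂ) * (truncMat (N:ℝ) a l l' * c l') with hterm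
    have htnorm : ∀ l', (‖term l'‖₊ : ℝ≥0∞) =
        ((‖truncMat (N:ℝ) a l l'‖₊ : ℝ≥0∞) *
          ENNReal.ofReal |phiN N k ((l' : Fin d → ℝ)) - φ|) * (‖c l'‖₊ : ℝ≥0∞) := by
      intro l'
      rw [hterm]; dsimp only
      rw [psiOp_eq]
      have : truncMat (N:ℝ) a l l' * ((phiN N (k : Fin d → ℤ) (l' : Fin d → ℝ) : ℂ) * c l') -
          (φ : ℂ) * (truncMat (N:ℝ) a l l' * c l') =
          (truncMat (N:ℝ) a l l' * ((phiN N k (l' : Fin d → ℝ) - φ : ℝ) : ℂ)) * c l' := by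
        push_cast
        ring
      rw [this, nnnorm_mul, nnnorm_mul, Complex.nnnorm_real, ENNReal.coe_mul, ENNReal.coe_mul,
        ← enorm_eq_nnnorm (phiN N k (l' : Fin d → ℝ) - φ), Real.enorm_eq_ofReal_abs]
    have habs2 : ∀ l' : Λ', |phiN N k ((l' : Fin d → ℝ)) - φ| ≤ 2 := by
      intro l'
      rw [hφ]
      linarith [phiN_abs_sub_le_one N k ((l' : Fin d → ℝ)) ((l : Fin d → ℝ))]
    have hfin : ∑' l', (‖term l'‖₊ : ℝ≥0∞) ≠ ⊤ := by
      have hbound : ∀ l', (‖term l'‖₊ : ℝ≥0∞) ≤ (‖a l l'‖₊ : ℝ≥0∞) * (2 * Mc) := by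
        intro l'
        rw [htnorm l']
        have hof2 : ENNReal.ofReal |phiN N k ((l' : Fin d → ℝ)) - φ| ≤ 2 := by
          rw [show (2:ℝ≥0∞) = ENNReal.ofReal 2 by norm_num]
          exact ENNReal.ofReal_le_ofReal (habs2 l')
        calc ((‖truncMat (N:ℝ) a l l'‖₊ : ℝ≥0∞) *
              ENNReal.ofReal |phiN N k ((l' : Fin d → ℝ)) - φ|) * (‖c l'‖₊ : ℝ≥0∞)
            ≤ ((‖a l l'‖₊ : ℝ≥0∞) * 2) * Mc :=
              mul_le_mul' (mul_le_mul' (hb_le _ l l') hof2) (hcb l')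
          _ = (‖a l l'‖₊ : ℝ≥0∞) * (2 * Mc) := by ring
      have h5 : ∑' l', (‖term l'‖₊ : ℝ≥0∞) ≤ (∑' l', (‖a l l'‖₊ : ℝ≥0∞)) * (2 * Mc) := by
        rw [← ENNReal.tsum_mul_right]
        exact ENNReal.tsum_le_tsum hbound
      exact (lt_of_le_of_lt h5 (ENNReal.mul_lt_top (hrowa l)
        (ENNReal.mul_lt_top (by norm_num) hMc))).ne
    have hsum_nn : Summable (fun l' => ‖term l'‖₊) :=
      ENNReal.tsum_coe_ne_top_iff_summable.mp hfin
    have htsummable : Summable term := hsum_nn.of_nnnorm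
    have hsum2 : Summable (fun l' => truncMat (N:ℝ) a l l' * c l') := by
      apply Summable.of_nnnorm
      rw [← ENNReal.tsum_coe_ne_top_iff_summable]
      have hbound : ∀ l', (‖truncMat (N:ℝ) a l l' * c l'‖₊ : ℝ≥0∞) ≤
          (‖a l l'‖₊ : ℝ≥0∞) * Mc := by
        intro l'
        calc (‖truncMat (N:ℝ) a l l' * c l'‖₊ : ℝ≥0∞)
            = (‖truncMat (N:ℝ) a l l'‖₊ : ℝ≥0∞) * (‖c l'‖₊ : ℝ≥0∞) := by
              rw [nnnorm_mul, ENNReal.coe_mul]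
          _ ≤ (‖a l l'‖₊ : ℝ≥0∞) * Mc := mul_le_mul' (hb_le _ l l') (hcb l')
      have h5 : ∑' l', (‖truncMat (N:ℝ) a l l' * c l'‖₊ : ℝ≥0∞) ≤
          (∑' l', (‖a l l'‖₊ : ℝ≥0∞)) * Mc := by
        rw [← ENNReal.tsum_mul_right]
        exact ENNReal.tsum_le_tsum hbound
      exact (lt_of_le_of_lt h5 (ENNReal.mul_lt_top (hrowa l) hMc)).ne
    have hsum1 : Summable (fun l' => truncMat (N:ℝ) a l l' * psiOp N k c l') := by
      have h6 := htsummable.add (hsum2.mul_left (φ : ℂ))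
      have heq : (fun l' => term l' + (φ : ℂ) * (truncMat (N:ℝ) a l l' * c l')) =
          (fun l' => truncMat (N:ℝ) a l l' * psiOp N k c l') := by
        funext l'; rw [hterm]; ring
      rwa [heq] at h6
    have hDeq : matApply (truncMat (N : ℝ) a) (psiOp N k c) l -
        psiOp N k (matApply (truncMat (N : ℝ) a) c) l = ∑' l', term l' := by
      rw [matApply, psiOp_eq, matApply, ← hφ, ← tsum_mul_left, ← Summable.tsum_sub hsum1
        (hsum2.mul_left (φ : ℂ))]
    have hkey : ∀ l', (‖truncMat (N:ℝ) a l l'‖₊ : ℝ≥0∞) *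
        ENNReal.ofReal |phiN N k ((l' : Fin d → ℝ)) - φ| ≤ W l l' := by
      intro l'
      by_cases h1 : ‖(l : Fin d → ℝ) - (l' : Fin d → ℝ)‖ < (N:ℝ)
      · by_cases h2 : phiN N k (l : Fin d → ℝ) = phiN N k (l' : Fin d → ℝ)
        · have hz : |phiN N k ((l' : Fin d → ℝ)) - φ| = 0 := by
            rw [hφ, h2]; simp
          rw [hz, ENNReal.ofReal_zero, mul_zero]
          exact zero_le
        · rw [hW]; dsimp only; rw [if_pos ⟨h1, h2⟩]
          have hba : truncMat (N:ℝ) a l l' = a l l' := if_pos h1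
          rw [hba, hu]; dsimp only
          by_cases h3 : ‖(l : Fin d → ℝ) - (l' : Fin d → ℝ)‖ < s
          · have habs : |phiN N k ((l' : Fin d → ℝ)) - φ| ≤ s/N := by
              rw [hφ]
              calc |phiN N k ((l' : Fin d → ℝ)) - phiN N k ((l : Fin d → ℝ))|
                  ≤ ‖(l' : Fin d → ℝ) - (l : Fin d → ℝ)‖ / N := phiN_diff_le hN k _ _
                _ ≤ s / N := by
                    rw [norm_sub_rev]
                    gcongr
            calc (‖a l l'‖₊ : ℝ≥0∞) * ENNReal.ofReal |phiN N k ((l' : Fin d → ℝ)) - φ|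
                ≤ (‖a l l'‖₊ : ℝ≥0∞) * ENNReal.ofReal (s/N) :=
                  mul_le_mul_right (ENNReal.ofReal_le_ofReal habs) _
              _ = ENNReal.ofReal (s/N) * (‖a l l'‖₊ : ℝ≥0∞) := mul_comm _ _
              _ ≤ _ := le_add_self
          · have hA2e : (‖A2 l l'‖₊ : ℝ≥0∞) = (‖a l l'‖₊ : ℝ≥0∞) := by
              rw [hA2]; dsimp only
              rw [show truncMat s a l l' = 0 from if_neg h3, sub_zero]
            have hof : ENNReal.ofReal |phiN N k ((l' : Fin d → ℝ)) - φ| ≤ 1 := by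
              rw [← ENNReal.ofReal_one]
              refine ENNReal.ofReal_le_ofReal ?_
              rw [hφ]
              exact phiN_abs_sub_le_one N k _ _
            calc (‖a l l'‖₊ : ℝ≥0∞) * ENNReal.ofReal |phiN N k ((l' : Fin d → ℝ)) - φ|
                ≤ (‖a l l'‖₊ : ℝ≥0∞) * 1 := mul_le_mul_right hof _
              _ = (‖A2 l l'‖₊ : ℝ≥0∞) := by rw [mul_one, hA2e]
              _ ≤ _ := le_self_add
      · have hz : truncMat (N:ℝ) a l l' = 0 := if_neg h1
        rw [hz]
        simp
    have hsel : ∀ l', W l l' * (‖c l'‖₊ : ℝ≥0∞) ≤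
        ∑ m ∈ shiftF d, W l l' * vψ (k+m) l' := by
      intro l'
      by_cases hWz : W l l' = 0
      · rw [hWz, zero_mul]
        exact Finset.sum_nonneg fun _ _ => zero_le
      · have hcond : ‖(l : Fin d → ℝ) - (l' : Fin d → ℝ)‖ < (N:ℝ) ∧
            phiN N k (l : Fin d → ℝ) ≠ phiN N k (l' : Fin d → ℝ) := by
          by_contra hc
          exact hWz (by rw [hW]; dsimp only; rw [if_neg hc])
        obtain ⟨h1, h2⟩ := hcond
        have h3 : ‖(l' : Fin d → ℝ) - (fun i => (N:ℝ) * (k i : ℝ))‖ < 3*(N:ℝ) := by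
          by_cases hz : phiN N k ((l' : Fin d → ℝ)) = 0
          · have hnz : phiN N k ((l : Fin d → ℝ)) ≠ 0 := fun h => h2 (h.trans hz.symm)
            have h4 := phiN_pos_norm hN hnz
            have h5 := dist_triangle ((l' : Fin d → ℝ)) ((l : Fin d → ℝ))
              (fun i => (N:ℝ) * (k i : ℝ))
            rw [dist_eq_norm, dist_eq_norm, dist_eq_norm] at h5
            rw [norm_sub_rev] at h1
            linarith
          · have h4 := phiN_pos_norm hN hz
            linarith
        obtain ⟨m, hmF, hm1⟩ := exists_shift hN h3
        have heq : W l l' * vψ (k+m) l' = W l l' * (‖c l'‖₊ : ℝ≥0∞) := by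
          rw [hψnorm, hm1, ENNReal.ofReal_one, one_mul]
        calc W l l' * (‖c l'‖₊ : ℝ≥0∞) = W l l' * vψ (k+m) l' := heq.symm
          _ ≤ _ := Finset.single_le_sum (f := fun m => W l l' * vψ (k+m) l')
              (fun _ _ => zero_le) hmF
    calc (‖matApply (truncMat (N : ℝ) a) (psiOp N k c) l -
          psiOp N k (matApply (truncMat (N : ℝ) a) c) l‖₊ : ℝ≥0∞)
        = (‖∑' l', term l'‖₊ : ℝ≥0∞) := by rw [hDeq]
      _ ≤ ∑' l', (‖term l'‖₊ : ℝ≥0∞) := by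
          rw [← ENNReal.coe_tsum hsum_nn]
          exact_mod_cast nnnorm_tsum_le hsum_nn
      _ ≤ ∑' l', W l l' * (‖c l'‖₊ : ℝ≥0∞) := ENNReal.tsum_le_tsum fun l' => by
          rw [htnorm l']
          exact mul_le_mul_left (hkey l') _
      _ ≤ ∑' l', ∑ m ∈ shiftF d, W l l' * vψ (k+m) l' := ENNReal.tsum_le_tsum hsel
      _ = ∑ m ∈ shiftF d, ∑' l', W l l' * vψ (k+m) l' := Summable.tsum_finsetSum fun _ _ => ENNReal.summable
  -- Schur estimate for each shift, then sum
  have he1 : 0 ≤ 1/p.toReal := by positivity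
  have he11 : 1/p.toReal ≤ 1 := by
    by_cases hpt : p = ∞
    · simp [hpt]
    · have h7 := one_le_toReal hp hpt
      rw [div_le_one (by positivity)]; linarith
  have he2 : 0 ≤ 1 - 1/p.toReal := by linarith
  have hsch : ∀ m : Fin d → ℤ, seqNormE p (fun l : Λ => ∑' l', W l l' * vψ (k+m) l') ≤
      2^d * relSep Λ ^ (1/p.toReal) * relSep Λ' ^ (1 - 1/p.toReal) * Θ *
        seqNorm p (psiOp N (k+m) c) := by
    intro m
    have h0 := schur p hp W (relSep Λ' * Θ) (2^d * relSep Λ * Θ) hrowW hcolW (vψ (k+m))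
    have hgv : seqNormE p (vψ (k+m)) = seqNorm p (psiOp N (k+m) c) := rfl
    calc seqNormE p (fun l : Λ => ∑' l', W l l' * vψ (k+m) l')
        ≤ (2^d * relSep Λ * Θ) ^ (1/p.toReal) * (relSep Λ' * Θ) ^ (1 - 1/p.toReal) *
          seqNormE p (vψ (k+m)) := h0
      _ = ((2:ℝ≥0∞)^d) ^ (1/p.toReal) * relSep Λ ^ (1/p.toReal) *
          relSep Λ' ^ (1 - 1/p.toReal) * (Θ ^ (1/p.toReal) * Θ ^ (1 - 1/p.toReal)) *
          seqNorm p (psiOp N (k+m) c) := by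
          rw [hgv, ENNReal.mul_rpow_of_nonneg _ _ he1, ENNReal.mul_rpow_of_nonneg _ _ he1,
            ENNReal.mul_rpow_of_nonneg _ _ he2]
          ring
      _ = ((2:ℝ≥0∞)^d) ^ (1/p.toReal) * relSep Λ ^ (1/p.toReal) *
          relSep Λ' ^ (1 - 1/p.toReal) * Θ * seqNorm p (psiOp N (k+m) c) := by
          rw [← ENNReal.rpow_add_of_nonneg _ _ he1 he2]
          norm_num
      _ ≤ 2^d * relSep Λ ^ (1/p.toReal) * relSep Λ' ^ (1 - 1/p.toReal) * Θ *
          seqNorm p (psiOp N (k+m) c) := by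
          gcongr
          calc ((2:ℝ≥0∞)^d) ^ (1/p.toReal) ≤ ((2:ℝ≥0∞)^d) ^ (1:ℝ) :=
              ENNReal.rpow_le_rpow_of_exponent_le (one_le_pow_of_one_le' one_le_two d) he11
            _ = 2^d := ENNReal.rpow_one _
  calc seqNorm p (fun l : Λ =>
        matApply (truncMat (N : ℝ) a) (psiOp N k c) l -
          psiOp N k (matApply (truncMat (N : ℝ) a) c) l)
      ≤ seqNormE p (fun l : Λ => ∑ m ∈ shiftF d, ∑' l', W l l' * vψ (k+m) l') :=
        seqNormE_mono p hDW
    _ ≤ ∑ m ∈ shiftF d, seqNormE p (fun l : Λ => ∑' l', W l l' * vψ (k+m) l') :=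
        seqNormE_sum_le p hp _ _
    _ ≤ ∑ m ∈ shiftF d, 2^d * relSep Λ ^ (1/p.toReal) * relSep Λ' ^ (1 - 1/p.toReal) * Θ *
          seqNorm p (psiOp N (k+m) c) := Finset.sum_le_sum fun m _ => hsch m
    _ = 2^d * relSep Λ ^ (1/p.toReal) * relSep Λ' ^ (1 - 1/p.toReal) * Θ *
          ∑ m ∈ shiftF d, seqNorm p (psiOp N (k+m) c) := by rw [Finset.mul_sum]

set_option maxHeartbeats 1000000

/-- **Commutator estimate (Lemma 2.6).** For `1 ≤ p, q ≤ ∞` there is a constant `C`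
depending only on `d, p, q` such that for all relatively-separated `Λ, Λ' ⊆ ℝ^d`, every
`A ∈ C(Λ,Λ')`, every integer `N ≥ 1` and every `c ∈ ℓ^q(Λ')`,
`‖(‖(A_N Ψ_n^N - Ψ_n^N A_N) c‖_{ℓ^p(Λ)})_{n ∈ Nℤ^d}‖_{ℓ^q}` is bounded by
`C R(Λ)^{1/p} R(Λ')^{1-1/p} · min_{0 ≤ s ≤ N}(‖A - A_s‖_C + (s/N) ‖A‖_C) ·
‖(‖Ψ_n^N c‖_{ℓ^p(Λ')})_{n ∈ Nℤ^d}‖_{ℓ^q}`. -/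
theorem sjostrand_commutator_estimate (d : ℕ) (p q : ℝ≥0∞) (hp : 1 ≤ p) (hq : 1 ≤ q) :
    ∃ C : ℝ≥0∞, 0 < C ∧ C < ∞ ∧
      ∀ (Λ Λ' : Set (Fin d → ℝ)), relSep Λ < ∞ → relSep Λ' < ∞ →
        ∀ a : Λ → Λ' → ℂ, sjNorm a < ∞ →
          ∀ N : ℕ, 1 ≤ N →
            ∀ c : Λ' → ℂ, seqNorm q c < ∞ →
              seqNormE q (fun k : Fin d → ℤ =>
                  seqNorm p (fun l : Λ =>
                    matApply (truncMat (N : ℝ) a) (psiOp N k c) l -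
                      psiOp N k (matApply (truncMat (N : ℝ) a) c) l)) ≤
                C * relSep Λ ^ (1 / p.toReal) * relSep Λ' ^ (1 - 1 / p.toReal) *
                  (⨅ s ∈ Set.Icc (0 : ℝ) (N : ℝ),
                    (sjNorm (fun l l' => a l l' - truncMat s a l l') +
                      ENNReal.ofReal (s / N) * sjNorm a)) *
                  seqNormE q (fun k : Fin d → ℤ => seqNorm p (psiOp N k c)) := by
  classical
  refine ⟨2^d * 7^d, ENNReal.mul_pos (pow_ne_zero d (by norm_num)) (pow_ne_zero d (by norm_num)),
    ENNReal.mul_lt_top (ENNReal.pow_lt_top (by norm_num : (2:ℝ≥0∞) < ∞)) (ENNReal.pow_lt_top (by norm_num : (7:ℝ≥0∞) < ∞)),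
    ?_⟩
  intro Λ Λ' hΛ hΛ' a ha N hN c hc
  have hN0 : (0:ℝ) < N := by exact_mod_cast hN
  have he1 : 0 ≤ 1/p.toReal := by positivity
  have he11 : 1/p.toReal ≤ 1 := by
    by_cases hpt : p = ∞
    · simp [hpt]
    · have h7 := one_le_toReal hp hpt
      rw [div_le_one (by positivity)]; linarith
  have he2 : 0 ≤ 1 - 1/p.toReal := by linarith
  by_cases hdiag : ∀ (l : Λ) (l' : Λ'), (l : Fin d → ℝ) ≠ (l' : Fin d → ℝ) → a l l' = 0
  · -- near-diagonal case: the commutator vanishes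
    have hD0 : ∀ (k : Fin d → ℤ) (l : Λ),
        matApply (truncMat (N : ℝ) a) (psiOp N k c) l -
          psiOp N k (matApply (truncMat (N : ℝ) a) c) l = 0 := by
      intro k l
      have hterm : ∀ l', truncMat (N:ℝ) a l l' * psiOp N k c l' =
          (phiN N k (l : Fin d → ℝ) : ℂ) * (truncMat (N:ℝ) a l l' * c l') := by
        intro l'
        by_cases hz : truncMat (N:ℝ) a l l' = 0
        · rw [hz]; ring
        · have haz : (l : Fin d → ℝ) = (l' : Fin d → ℝ) := by
            by_contra hne
            apply hz
            have h0 : a l l' = 0 := hdiag l l' hne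
            by_cases hlt : ‖(l : Fin d → ℝ) - (l' : Fin d → ℝ)‖ < (N:ℝ)
            · rw [show truncMat (N:ℝ) a l l' = a l l' from if_pos hlt, h0]
            · exact if_neg hlt
          rw [psiOp_eq, haz]
          ring
      rw [matApply, psiOp_eq, matApply, tsum_congr hterm, tsum_mul_left]
      ring
    have h1 : ∀ k : Fin d → ℤ, seqNorm p (fun l : Λ =>
        matApply (truncMat (N : ℝ) a) (psiOp N k c) l -
          psiOp N k (matApply (truncMat (N : ℝ) a) c) l) = 0 := by
      intro k
      rw [show (fun l : Λ => matApply (truncMat (N : ℝ) a) (psiOp N k c) l -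
          psiOp N k (matApply (truncMat (N : ℝ) a) c) l) = fun _ => (0:ℂ) from funext (hD0 k)]
      rw [seqNorm, show (fun l : Λ => (‖(0:ℂ)‖₊ : ℝ≥0∞)) = fun _ => 0 by simp]
      exact seqNormE_zero p hp
    rw [show (fun k : Fin d → ℤ => seqNorm p (fun l : Λ =>
        matApply (truncMat (N : ℝ) a) (psiOp N k c) l -
          psiOp N k (matApply (truncMat (N : ℝ) a) c) l)) = fun _ => (0:ℝ≥0∞) from funext h1]
    rw [seqNormE_zero q hq]
    exact zero_le
  · push_neg at hdiag
    obtain ⟨l0, l0', hne0, ha0⟩ := hdiag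
    -- the infimum is bounded below by a positive constant
    have ht0 : 0 < ‖(l0 : Fin d → ℝ) - (l0' : Fin d → ℝ)‖ := by
      rw [norm_pos_iff]
      exact sub_ne_zero_of_ne hne0
    set t : ℝ := ‖(l0 : Fin d → ℝ) - (l0' : Fin d → ℝ)‖ with htdef
    set δ : ℝ≥0∞ := min (‖a l0 l0'‖₊ : ℝ≥0∞) (ENNReal.ofReal (t/N) * (‖a l0 l0'‖₊ : ℝ≥0∞))
      with hδdef
    have ha0' : (0:ℝ≥0∞) < (‖a l0 l0'‖₊ : ℝ≥0∞) := by
      simp only [ENNReal.coe_pos, nnnorm_pos]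
      exact ha0
    have hδ0 : 0 < δ := by
      apply lt_min ha0'
      apply ENNReal.mul_pos _ ha0'.ne'
      simp only [ne_eq, ENNReal.ofReal_eq_zero, not_le]
      positivity
    have hIδ : δ ≤ ⨅ s ∈ Set.Icc (0 : ℝ) (N : ℝ),
        (sjNorm (fun l l' => a l l' - truncMat s a l l') +
          ENNReal.ofReal (s / N) * sjNorm a) := by
      refine le_iInf₂ fun s hs => ?_
      by_cases hst : s ≤ t
      · have htr : truncMat s a l0 l0' = 0 := if_neg (not_lt.mpr hst)
        have hentry : (‖a l0 l0'‖₊ : ℝ≥0∞) ≤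
            sjNorm (fun l l' => a l l' - truncMat s a l l') := by
          have h8 := entry_le_sjNorm (fun l l' => a l l' - truncMat s a l l') l0 l0'
          rw [show a l0 l0' - truncMat s a l0 l0' = a l0 l0' by rw [htr, sub_zero]] at h8
          exact h8
        exact le_trans (min_le_left _ _) (le_trans hentry le_self_add)
      · push_neg at hst
        refine le_trans (min_le_right _ _) (le_trans ?_ le_add_self)
        exact mul_le_mul' (ENNReal.ofReal_le_ofReal (by gcongr))
          (entry_le_sjNorm a l0 l0')
    -- the q-level estimate for every admissible truncation radius s
    have hMc : ∀ j : Λ', (‖c j‖₊ : ℝ≥0∞) ≤ seqNorm q c := fun j =>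
      le_seqNormE q hq (fun j => (‖c j‖₊ : ℝ≥0∞)) j
    set Z : ℝ≥0∞ := seqNormE q (fun k : Fin d → ℤ => seqNorm p (psiOp N k c)) with hZdef
    have qlevel : ∀ s ∈ Set.Icc (0 : ℝ) (N : ℝ),
        seqNormE q (fun k : Fin d → ℤ =>
          seqNorm p (fun l : Λ =>
            matApply (truncMat (N : ℝ) a) (psiOp N k c) l -
              psiOp N k (matApply (truncMat (N : ℝ) a) c) l)) ≤
        2^d * 7^d * relSep Λ ^ (1 / p.toReal) * relSep Λ' ^ (1 - 1 / p.toReal) *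
          (sjNorm (fun l l' => a l l' - truncMat s a l l') +
            ENNReal.ofReal (s / N) * sjNorm a) * Z := by
      intro s hs
      set Θ : ℝ≥0∞ := sjNorm (fun l l' => a l l' - truncMat s a l l') +
        ENNReal.ofReal (s / N) * sjNorm a with hΘdef
      set K : ℝ≥0∞ := 2^d * relSep Λ ^ (1/p.toReal) * relSep Λ' ^ (1 - 1/p.toReal) * Θ with hKdef
      have hcore : ∀ k : Fin d → ℤ,
          seqNorm p (fun l : Λ =>
            matApply (truncMat (N : ℝ) a) (psiOp N k c) l -
              psiOp N k (matApply (truncMat (N : ℝ) a) c) l) ≤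
          K * ∑ m ∈ shiftF d, seqNorm p (psiOp N (k+m) c) := by
        intro k
        exact core_bound p hp hΛ' a ha hN c (seqNorm q c) hc hMc hs.1 hs.2 k
      calc seqNormE q (fun k : Fin d → ℤ =>
            seqNorm p (fun l : Λ =>
              matApply (truncMat (N : ℝ) a) (psiOp N k c) l -
                psiOp N k (matApply (truncMat (N : ℝ) a) c) l))
          ≤ seqNormE q (fun k : Fin d → ℤ =>
              K * ∑ m ∈ shiftF d, seqNorm p (psiOp N (k+m) c)) := seqNormE_mono q hcore
        _ ≤ K * seqNormE q (fun k : Fin d → ℤ =>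
              ∑ m ∈ shiftF d, seqNorm p (psiOp N (k+m) c)) := seqNormE_mul_le q hq K _
        _ ≤ K * ∑ m ∈ shiftF d, seqNormE q (fun k : Fin d → ℤ =>
              seqNorm p (psiOp N (k+m) c)) :=
            mul_le_mul_right (seqNormE_sum_le q hq (shiftF d)
              (fun m k => seqNorm p (psiOp N (k+m) c))) K
        _ = K * ∑ m ∈ shiftF d, Z := by
            rw [hZdef]
            congr 1
            exact Finset.sum_congr rfl fun m _ =>
              seqNormE_shift q (fun j : Fin d → ℤ => seqNorm p (psiOp N j c)) m
        _ = K * ((7^d : ℝ≥0∞) * Z) := by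
            rw [Finset.sum_const, card_shiftF, nsmul_eq_mul]
            norm_num
        _ = 2^d * 7^d * relSep Λ ^ (1 / p.toReal) * relSep Λ' ^ (1 - 1 / p.toReal) * Θ * Z := by
            rw [hKdef]; ring
    -- put the pieces together
    by_cases hZt : Z = ⊤
    · have hX0 : relSep Λ ^ (1 / p.toReal) ≠ 0 :=
        (ENNReal.rpow_pos (lt_of_lt_of_le one_pos (relSep_pos ⟨l0⟩)) hΛ.ne).ne'
      have hY0 : relSep Λ' ^ (1 - 1 / p.toReal) ≠ 0 :=
        (ENNReal.rpow_pos (lt_of_lt_of_le one_pos (relSep_pos ⟨l0'⟩)) hΛ'.ne).ne'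
      have hI0 : (⨅ s ∈ Set.Icc (0 : ℝ) (N : ℝ),
          (sjNorm (fun l l' => a l l' - truncMat s a l l') +
            ENNReal.ofReal (s / N) * sjNorm a)) ≠ 0 := (lt_of_lt_of_le hδ0 hIδ).ne'
      rw [hZt, ENNReal.mul_top (by
        refine mul_ne_zero (mul_ne_zero (mul_ne_zero ?_ hX0) hY0) hI0
        exact (ENNReal.mul_pos (pow_ne_zero d (by norm_num))
          (pow_ne_zero d (by norm_num))).ne')]
      exact le_top
    by_cases hZ0 : Z = 0
    · have h9 := qlevel 0 ⟨le_rfl, hN0.le⟩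
      rw [hZ0, mul_zero] at h9
      exact h9.trans (zero_le)
    · -- Z is finite and positive: divide through
      set AZ : ℝ≥0∞ := 2^d * 7^d * relSep Λ ^ (1 / p.toReal) *
        relSep Λ' ^ (1 - 1 / p.toReal) * Z with hAZdef
      have hXt : relSep Λ ^ (1 / p.toReal) ≠ ⊤ := ENNReal.rpow_ne_top_of_nonneg he1 hΛ.ne
      have hYt : relSep Λ' ^ (1 - 1 / p.toReal) ≠ ⊤ := ENNReal.rpow_ne_top_of_nonneg he2 hΛ'.ne
      have hX0 : relSep Λ ^ (1 / p.toReal) ≠ 0 :=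
        (ENNReal.rpow_pos (lt_of_lt_of_le one_pos (relSep_pos ⟨l0⟩)) hΛ.ne).ne'
      have hY0 : relSep Λ' ^ (1 - 1 / p.toReal) ≠ 0 :=
        (ENNReal.rpow_pos (lt_of_lt_of_le one_pos (relSep_pos ⟨l0'⟩)) hΛ'.ne).ne'
      have hAZ0 : AZ ≠ 0 := by
        rw [hAZdef]
        refine mul_ne_zero (mul_ne_zero (mul_ne_zero ?_ hX0) hY0) hZ0
        exact (ENNReal.mul_pos (pow_ne_zero d (by norm_num))
          (pow_ne_zero d (by norm_num))).ne'
      have hAZt : AZ ≠ ⊤ := by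
        rw [hAZdef]
        refine ENNReal.mul_ne_top (ENNReal.mul_ne_top (ENNReal.mul_ne_top ?_ hXt) hYt) hZt
        exact (ENNReal.mul_lt_top (ENNReal.pow_lt_top (by norm_num : (2:ℝ≥0∞) < ∞))
          (ENNReal.pow_lt_top (by norm_num : (7:ℝ≥0∞) < ∞))).ne
      have hdiv : (seqNormE q (fun k : Fin d → ℤ =>
          seqNorm p (fun l : Λ =>
            matApply (truncMat (N : ℝ) a) (psiOp N k c) l -
              psiOp N k (matApply (truncMat (N : ℝ) a) c) l))) / AZ ≤
          ⨅ s ∈ Set.Icc (0 : ℝ) (N : ℝ),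
            (sjNorm (fun l l' => a l l' - truncMat s a l l') +
              ENNReal.ofReal (s / N) * sjNorm a) := by
        refine le_iInf₂ fun s hs => ?_
        rw [ENNReal.div_le_iff hAZ0 hAZt]
        refine (qlevel s hs).trans_eq ?_
        rw [hAZdef]
        ring
      rw [ENNReal.div_le_iff hAZ0 hAZt] at hdiv
      refine hdiv.trans_eq ?_
      rw [hAZdef]
      ring
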